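/- Let q be an odd prime and let P, Q be integers with Q not divisible by q. If the Legendre symbol ((P² − 4Q)/q) equals 1, then V_{q−1}(P, Q) ≡ Q^{q−1} + 1 (mod q²). -/

import Mathlib

/-- The Lucas sequence of the second kind `V_n(P, Q)`:
`V_0 = 2`, `V_1 = P`, `V_i = P * V_{i-1} - Q * V_{i-2}`. -/
def lucasV (P Q : ℤ) : ℕ → ℤ
  | 0 => 2
  | 1 => P
  | n + 2 => P * lucasV P Q (n + 1) - Q * lucasV P Q n

/-- The Lucas sequence of the first kind. -/
def lucasU (P Q : ℤ) : ℕ → ℤ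
  | 0 => 0
  | 1 => 1
  | n + 2 => P * lucasU P Q (n + 1) - Q * lucasU P Q n

lemma lucas_key (P Q : ℤ) : ∀ n : ℕ,
    (lucasV P Q n)^2 - (P^2 - 4*Q) * (lucasU P Q n)^2 = 4 * Q^n ∧
    (lucasV P Q (n+1))^2 - (P^2 - 4*Q) * (lucasU P Q (n+1))^2 = 4 * Q^(n+1) ∧
    lucasV P Q (n+1) * lucasV P Q n - (P^2 - 4*Q) * (lucasU P Q (n+1) * lucasU P Q n)
      = 2 * P * Q^n := by
  intro n
  induction n with
  | zero =>
    refine ⟨by simp [lucasV, lucasU], ?_, ?_⟩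
    · simp only [lucasV, lucasU]; ring
    · simp only [lucasV, lucasU]; ring
  | succ n ih =>
    obtain ⟨h1, h2, h3⟩ := ih
    refine ⟨h2, ?_, ?_⟩
    · show (P * lucasV P Q (n+1) - Q * lucasV P Q n)^2
        - (P^2 - 4*Q) * (P * lucasU P Q (n+1) - Q * lucasU P Q n)^2 = 4 * Q^(n+1+1)
      linear_combination P^2 * h2 + Q^2 * h1 - 2*P*Q * h3
    · show (P * lucasV P Q (n+1) - Q * lucasV P Q n) * lucasV P Q (n+1)
        - (P^2 - 4*Q) * ((P * lucasU P Q (n+1) - Q * lucasU P Q n) * lucasU P Q (n+1))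
        = 2 * P * Q^(n+1)
      linear_combination P * h2 - Q * h3

lemma lucas_roots (q : ℕ) [Fact q.Prime] (P Q : ℤ) (α β s : ZMod q)
    (hab : α + β = (P : ZMod q)) (hm : α * β = (Q : ZMod q)) (hs : α - β = s) :
    ∀ n : ℕ,
    (((lucasV P Q n : ℤ) : ZMod q) = α^n + β^n ∧
      s * ((lucasU P Q n : ℤ) : ZMod q) = α^n - β^n) ∧
    (((lucasV P Q (n+1) : ℤ) : ZMod q) = α^(n+1) + β^(n+1) ∧
      s * ((lucasU P Q (n+1) : ℤ) : ZMod q) = α^(n+1) - β^(n+1)) := by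
  intro n
  induction n with
  | zero =>
    refine ⟨⟨by norm_num [lucasV], by simp [lucasU]⟩, ⟨?_, ?_⟩⟩
    · simp [lucasV, hab]
    · simp [lucasU, hs]
  | succ n ih =>
    obtain ⟨⟨hv1, hu1⟩, hv2, hu2⟩ := ih
    refine ⟨⟨hv2, hu2⟩, ?_, ?_⟩
    · show ((P * lucasV P Q (n+1) - Q * lucasV P Q n : ℤ) : ZMod q) = _
      push_cast
      rw [hv1, hv2, ← hab, ← hm]; ring
    · show s * ((P * lucasU P Q (n+1) - Q * lucasU P Q n : ℤ) : ZMod q) = _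
      push_cast
      linear_combination ((P : ZMod q)) * hu2 - ((Q : ZMod q)) * hu1
        + (α^(n+1) - β^(n+1)) * hab.symm - (α^n - β^n) * hm.symm

/-- **Theorem 4, (12).** If `q` is an odd prime, `q ∤ Q` and `(P² - 4Q / q) = 1`,
then `V_{q-1}(P, Q) ≡ Q^{q-1} + 1 (mod q²)`. -/
theorem lucasV_qsub1_congr (q : ℕ) [Fact q.Prime] (hodd : Odd q) (P Q : ℤ)
    (hQ : ¬ (q : ℤ) ∣ Q) (hleg : legendreSym q (P ^ 2 - 4 * Q) = 1) :
    lucasV P Q (q - 1) ≡ Q ^ (q - 1) + 1 [ZMOD (q : ℤ) ^ 2] := by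
  have hq : q.Prime := Fact.out
  have hq2 : q ≠ 2 := by rintro rfl; exact (Nat.not_odd_iff_even.mpr (by decide)) hodd
  -- D nonzero mod q
  have hD0 : ((P ^ 2 - 4 * Q : ℤ) : ZMod q) ≠ 0 := by
    intro h
    rw [← legendreSym.eq_zero_iff] at h
    omega
  have hsq : IsSquare ((P ^ 2 - 4 * Q : ℤ) : ZMod q) :=
    (legendreSym.eq_one_iff q hD0).mp hleg
  obtain ⟨s, hs⟩ := hsq
  have h2 : (2 : ZMod q) ≠ 0 := by
    intro h
    have hd : (q : ℕ) ∣ 2 := (ZMod.natCast_eq_zero_iff 2 q).mp (by exact_mod_cast h)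
    exact hq2 ((Nat.prime_dvd_prime_iff_eq hq Nat.prime_two).mp hd)
  set α : ZMod q := (P + s) * (2 : ZMod q)⁻¹ with hα
  set β : ZMod q := ((P : ZMod q) - s) * (2 : ZMod q)⁻¹ with hβ
  have hab : α + β = (P : ZMod q) := by
    rw [hα, hβ]; field_simp; ring
  have hm : α * β = (Q : ZMod q) := by
    have : (s : ZMod q) * s = ((P:ZMod q))^2 - 4 * (Q : ZMod q) := by
      push_cast at hs; linear_combination -hs
    rw [hα, hβ]; field_simp
    linear_combination -this
  have hsd : α - β = s := by
    rw [hα, hβ]; field_simp; ring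
  have hQ0 : (Q : ZMod q) ≠ 0 := fun h => hQ ((ZMod.intCast_zmod_eq_zero_iff_dvd Q q).mp h)
  have hα0 : α ≠ 0 := fun h => hQ0 (by rw [← hm, h, zero_mul])
  have hβ0 : β ≠ 0 := fun h => hQ0 (by rw [← hm, h, mul_zero])
  have hs0 : s ≠ 0 := by
    intro h; apply hD0; rw [hs, h, mul_zero]
  obtain ⟨⟨hv, hu⟩, -⟩ := lucas_roots q P Q α β s hab hm hsd (q - 1)
  rw [ZMod.pow_card_sub_one_eq_one hα0, ZMod.pow_card_sub_one_eq_one hβ0] at hv hu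
  -- mod q facts as divisibilities
  have hVd : (q : ℤ) ∣ lucasV P Q (q - 1) - 2 := by
    rw [← ZMod.intCast_zmod_eq_zero_iff_dvd]
    push_cast
    rw [hv]; ring
  have hUd : (q : ℤ) ∣ lucasU P Q (q - 1) := by
    rw [← ZMod.intCast_zmod_eq_zero_iff_dvd]
    have h0 : s * ((lucasU P Q (q - 1) : ℤ) : ZMod q) = s * 0 := by
      rw [hu]; simp
    exact mul_left_cancel₀ hs0 h0
  have hQd : (q : ℤ) ∣ Q ^ (q - 1) - 1 := by
    rw [← ZMod.intCast_zmod_eq_zero_iff_dvd]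
    push_cast
    rw [ZMod.pow_card_sub_one_eq_one hQ0]; ring
  obtain ⟨hid, -, -⟩ := lucas_key P Q (q - 1)
  set V := lucasV P Q (q - 1)
  set U := lucasU P Q (q - 1)
  set R : ℤ := Q ^ (q - 1) + 1 with hR
  have hsqd : ((q : ℤ))^2 ∣ (V - R) * (V + R) := by
    have h1 : ((q:ℤ))^2 ∣ (P^2 - 4*Q) * U^2 := by
      obtain ⟨k, hk⟩ := hUd
      exact ⟨(P^2-4*Q) * k^2, by rw [hk]; ring⟩
    have h2' : ((q:ℤ))^2 ∣ (Q^(q-1) - 1)^2 := by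
      obtain ⟨k, hk⟩ := hQd
      exact ⟨k^2, by rw [hk]; ring⟩
    have : (V - R) * (V + R) = (P^2-4*Q) * U^2 - (Q^(q-1)-1)^2 := by
      rw [hR]; linear_combination hid
    rw [this]
    exact dvd_sub h1 h2'
  have hnd : ¬ (q : ℤ) ∣ (V + R) := by
    intro h
    have h4 : (q : ℤ) ∣ 4 := by
      have := dvd_sub (dvd_sub h hVd) hQd
      have e : V + R - (V - 2) - (Q^(q-1) - 1) = 4 := by rw [hR]; ring
      rwa [e] at this
    have h4' : q ∣ 4 := by exact_mod_cast h4
    have h22 : q ∣ 2 ^ 2 := by simpa using h4'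
    have : q ∣ 2 := hq.dvd_of_dvd_pow h22
    exact hq2 ((Nat.prime_dvd_prime_iff_eq hq Nat.prime_two).mp this)
  have hp : Prime (q : ℤ) := Nat.prime_iff_prime_int.mp hq
  have hcop : IsCoprime ((q : ℤ)^2) (V + R) :=
    ((hp.coprime_iff_not_dvd).mpr hnd).pow_left
  have : ((q:ℤ))^2 ∣ (V - R) := hcop.dvd_of_dvd_mul_right hsqd
  have hd : ((q:ℤ))^2 ∣ R - V := by
    have := dvd_neg.mpr this
    rwa [neg_sub] at this
  exact (Int.modEq_iff_dvd).mpr hd
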